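/- Let $a,c,C$ be real numbers with $0<c\leq a\leq C$, let $k$ be a positive integer, and consider $f(\eta)=-a\eta^{2k+1}+\sum_{j=0}^{2k}a_j\eta^j$ with $|a_j|\leq C$ for all $j$. Then there exist constants $a''\geq 0$ and $b''>0$, depending only on $c$, $C$ and $k$, such that for all real $u,v$: $\operatorname{sgn}(u)\,(f(u+v)-f(v)) \leq a''(1+|v|)^{2k+1} - b''|u|^{2k+1}$. -/

import Mathlib

-- convexity-ish: for a,b ≥ 0 odd-style, 2*((a+b)/2)^n ≤ a^n+b^n via add_pow_le
lemma aux_nonneg : ∀ j : ℕ, ∀ m h : ℝ, 0 ≤ m → 0 ≤ h →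
    2 * h ^ (2*j+1) ≤ (m+h) ^ (2*j+1) - (m-h) ^ (2*j+1) := by
  intro j
  induction j with
  | zero => intro m h _ _; simp; nlinarith
  | succ i ih =>
    intro m h hm hh
    have hN : 2*(i+1)+1 = (2*i+1) + 2 := by ring
    rcases le_total h m with hmh | hmh
    · -- h ≤ m
      have h1 : (0:ℝ) ≤ m - h := by linarith
      have h2 : (m-h)^(2*i+1) ≤ (m+h)^(2*i+1) := by
        apply pow_le_pow_left₀ h1; linarith
      have h3 : (0:ℝ) ≤ (m-h)^(2*i+1) := pow_nonneg h1 _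
      have h4 : (m-h)^2 ≤ (m+h)^2 := by nlinarith
      have h5 : (m-h)^(2*(i+1)+1) = (m-h)^2 * (m-h)^(2*i+1) := by
        rw [hN]; ring
      have h6 : (m+h)^(2*(i+1)+1) = (m+h)^2 * (m+h)^(2*i+1) := by
        rw [hN]; ring
      have ihm := ih m h hm hh
      have h7 : h^2 * (2 * h^(2*i+1)) ≤ (m+h)^2 * ((m+h)^(2*i+1) - (m-h)^(2*i+1)) := by
        apply mul_le_mul (by nlinarith) ihm (by positivity) (by positivity)
      have h8 : (m-h)^2 * (m-h)^(2*i+1) ≤ (m+h)^2 * (m-h)^(2*i+1) :=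
        mul_le_mul_of_nonneg_right h4 h3
      have : h^2 * (2*h^(2*i+1)) = 2 * h^(2*(i+1)+1) := by rw [hN]; ring
      nlinarith
    · -- m ≤ h
      have h1 : (0:ℝ) ≤ h - m := by linarith
      have hodd : Odd (2*(i+1)+1) := ⟨i+1, by ring⟩
      have h2 : (m-h)^(2*(i+1)+1) = -((h-m)^(2*(i+1)+1)) := by
        rw [show m - h = -(h-m) by ring, hodd.neg_pow]
      have h3 := add_pow_le (by linarith : (0:ℝ) ≤ m+h) h1 (2*(i+1)+1)
      have h4 : (m+h) + (h-m) = 2*h := by ring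
      rw [h4] at h3
      have h5 : (2*h)^(2*(i+1)+1) = 2^(2*(i+1)+1) * h^(2*(i+1)+1) := by
        rw [mul_pow]
      rw [Nat.add_sub_cancel] at h3
      have h6 : (2:ℝ)^(2*(i+1)+1) = 2 * 2^(2*(i+1)) := by rw [pow_succ]; ring
      rw [h5, h6] at h3
      have h7 : (0:ℝ) < 2^(2*(i+1)) := by positivity
      nlinarith

lemma aux_all (j : ℕ) (m h : ℝ) (hh : 0 ≤ h) :
    2 * h ^ (2*j+1) ≤ (m+h) ^ (2*j+1) - (m-h) ^ (2*j+1) := by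
  rcases le_total 0 m with hm | hm
  · exact aux_nonneg j m h hm hh
  · have := aux_nonneg j (-m) h (by linarith) hh
    have hodd : Odd (2*j+1) := ⟨j, by ring⟩
    have e1 : (-m+h) = -(m-h) := by ring
    have e2 : (-m-h) = -(m+h) := by ring
    rw [e1, e2, hodd.neg_pow, hodd.neg_pow] at this
    linarith

lemma key (j : ℕ) (s t : ℝ) (h : t ≤ s) :
    (s - t)^(2*j+1) ≤ 2^(2*j) * (s^(2*j+1) - t^(2*j+1)) := by
  have := aux_all j ((s+t)/2) ((s-t)/2) (by linarith)
  have e1 : (s+t)/2 + (s-t)/2 = s := by ring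
  have e2 : (s+t)/2 - (s-t)/2 = t := by ring
  rw [e1, e2] at this
  have e3 : (s-t)^(2*j+1) = 2^(2*j) * (2 * ((s-t)/2)^(2*j+1)) := by
    rw [div_pow]
    rw [show (2:ℝ)^(2*j+1) = 2^(2*j)*2 by ring]
    field_simp
  rw [e3]
  have : (0:ℝ) < 2^(2*j) := by positivity
  nlinarith

lemma sign_key (j : ℕ) (u v : ℝ) :
    |u|^(2*j+1) ≤ 2^(2*j) * (Real.sign u * ((u+v)^(2*j+1) - v^(2*j+1))) := by
  rcases lt_trichotomy u 0 with h | h | h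
  · rw [Real.sign_of_neg h, abs_of_neg h]
    have := key j v (u+v) (by linarith)
    have e : v - (u+v) = -u := by ring
    rw [e] at this
    nlinarith [this]
  · simp [h]
  · rw [Real.sign_of_pos h, abs_of_pos h]
    have := key j (u+v) v (by linarith)
    have e : (u+v) - v = u := by ring
    rw [e] at this
    nlinarith [this]

lemma young (n j : ℕ) (hj : j < n) (x δ : ℝ) (hx : 0 ≤ x) (hδ : 0 < δ) :
    x ^ j ≤ δ * x ^ n + (1 + 1/δ) ^ n := by
  rcases le_total x (1 + 1/δ) with h | h
  · have h1 : x ^ j ≤ (1+1/δ)^j := pow_le_pow_left₀ hx h j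
    have h2 : (1:ℝ) ≤ 1 + 1/δ := by
      have : 0 < 1/δ := by positivity
      linarith
    have h3 : (1+1/δ)^j ≤ (1+1/δ)^n := pow_le_pow_right₀ h2 (le_of_lt hj)
    have : (0:ℝ) ≤ δ * x ^ n := by positivity
    linarith
  · have h2 : (1:ℝ) ≤ 1 + 1/δ := by
      have : 0 < 1/δ := by positivity
      linarith
    have hx1 : (1:ℝ) ≤ x := le_trans h2 h
    have h1 : x ^ j * x ≤ x ^ n := by
      calc x ^ j * x = x ^ (j+1) := (pow_succ x j).symm
        _ ≤ x ^ n := pow_le_pow_right₀ hx1 hj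
    have h3 : 1/δ ≤ x := by
      have : 0 < 1/δ := by positivity
      linarith
    have h4 : x ^ j * (1/δ) ≤ x ^ j * x :=
      mul_le_mul_of_nonneg_left h3 (pow_nonneg hx _)
    have h5 : x ^ j * (1/δ) ≤ x ^ n := le_trans h4 h1
    have h6 : x ^ j ≤ δ * x ^ n := by
      rw [one_div] at h5
      calc x ^ j = δ * (x^j * δ⁻¹) := by field_simp
        _ ≤ δ * x ^ n := mul_le_mul_of_nonneg_left h5 (le_of_lt hδ)
    have : (0:ℝ) ≤ (1+1/δ)^n := by positivity
    linarith



/-- One-dimensional dissipativity estimate for odd-degree polynomials with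
negative leading coefficient: there are constants `a'' ≥ 0`, `b'' > 0`
depending only on `c`, `C`, `k` such that
`sgn(u)(f(u+v) - f(v)) ≤ a''(1+|v|)^(2k+1) - b''|u|^(2k+1)`. -/
theorem stmt_6 (c C : ℝ) (hc : 0 < c) (hcC : c ≤ C) (k : ℕ) (hk : 1 ≤ k) :
    ∃ a'' b'' : ℝ, 0 ≤ a'' ∧ 0 < b'' ∧
      ∀ (a : ℝ) (aj : ℕ → ℝ), c ≤ a → a ≤ C → (∀ j ≤ 2 * k, |aj j| ≤ C) →
        ∀ u v : ℝ,
          Real.sign u *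
            ((-a * (u + v) ^ (2 * k + 1)
                + ∑ j ∈ Finset.range (2 * k + 1), aj j * (u + v) ^ j)
              - (-a * v ^ (2 * k + 1)
                + ∑ j ∈ Finset.range (2 * k + 1), aj j * v ^ j))
          ≤ a'' * (1 + |v|) ^ (2 * k + 1) - b'' * |u| ^ (2 * k + 1) := by
  have hC : 0 < C := hc.trans_le hcC
  obtain ⟨Nr, hNrdef⟩ : ∃ x : ℝ, x = ((2*k+1 : ℕ) : ℝ) := ⟨_, rfl⟩
  have hNr : 0 < Nr := by rw [hNrdef]; exact_mod_cast Nat.succ_pos _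
  obtain ⟨δ, hδdef⟩ : ∃ x : ℝ, x = c / (C * Nr * 2^(2*k+1) * 2^(2*k)) := ⟨_, rfl⟩
  have hNr' : 0 < C * Nr * 2^(2*k+1) * 2^(2*k) := by positivity
  have hδ : 0 < δ := by rw [hδdef]; positivity
  obtain ⟨K, hKdef⟩ : ∃ x : ℝ, x = (1+1/δ)^(2*k+1) := ⟨_, rfl⟩
  have hK0 : (0:ℝ) ≤ K := by rw [hKdef]; positivity
  have hp1 : ((2:ℝ))^(2*k) ≠ 0 := by positivity
  have hp2 : ((2:ℝ))^(2*k+1) ≠ 0 := by positivity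
  have hδid : Nr * (C * (δ * 2^(2*k))) = c/(2*2^(2*k)) := by
    rw [hδdef]; field_simp; ring
  refine ⟨C*Nr*(δ*2^(2*k)+K+1), c/(2*2^(2*k)), by positivity, by positivity, ?_⟩
  intro a aj hca haC haj u v
  -- notation
  have hkey := sign_key k u v
  have hS0 : 0 ≤ Real.sign u * ((u+v)^(2*k+1) - v^(2*k+1)) := by
    nlinarith [hkey, pow_nonneg (abs_nonneg u) (2*k+1),
      (by positivity : (0:ℝ) < 2^(2*k))]
  have f1 : c/(2^(2*k)) * |u|^(2*k+1)
      ≤ c * (Real.sign u * ((u+v)^(2*k+1) - v^(2*k+1))) := by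
    rw [div_mul_eq_mul_div, div_le_iff₀ (by positivity : (0:ℝ) < 2^(2*k))]
    nlinarith [hkey]
  have f2 : c * (Real.sign u * ((u+v)^(2*k+1) - v^(2*k+1)))
      ≤ a * (Real.sign u * ((u+v)^(2*k+1) - v^(2*k+1))) :=
    mul_le_mul_of_nonneg_right hca hS0
  -- bound on the lower order terms
  have one_le : (1:ℝ) ≤ (1+|v|)^(2*k+1) := by
    have h := pow_le_pow_left₀ zero_le_one
      (show (1:ℝ) ≤ 1+|v| by linarith [abs_nonneg v]) (2*k+1)
    rwa [one_pow] at h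
  have ypown : |v|^(2*k+1) ≤ (1+|v|)^(2*k+1) :=
    pow_le_pow_left₀ (abs_nonneg v) (by linarith [abs_nonneg v]) _
  have addpow : (|u|+|v|)^(2*k+1) ≤ 2^(2*k) * (|u|^(2*k+1) + |v|^(2*k+1)) := by
    have h := add_pow_le (abs_nonneg u) (abs_nonneg v) (2*k+1)
    rwa [Nat.add_sub_cancel] at h
  have habs : ∀ j ∈ Finset.range (2*k+1),
      |aj j * (u+v)^j - aj j * v^j|
        ≤ C * (δ*2^(2*k)*|u|^(2*k+1) + (δ*2^(2*k)+K+1)*(1+|v|)^(2*k+1)) := by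
    intro j hj
    have hj' : j < 2*k+1 := Finset.mem_range.mp hj
    have hajj : |aj j| ≤ C := haj j (by omega)
    have e1 : |aj j * (u+v)^j - aj j * v^j| ≤ |aj j| * (|u+v|^j + |v|^j) := by
      calc |aj j * (u+v)^j - aj j * v^j|
          ≤ |aj j * (u+v)^j| + |aj j * v^j| := abs_sub _ _
        _ = |aj j| * (|u+v|^j + |v|^j) := by
            rw [abs_mul, abs_mul, abs_pow, abs_pow]; ring
    have p0 : |u+v|^j ≤ (|u|+|v|)^j :=
      pow_le_pow_left₀ (abs_nonneg _) (abs_add_le u v) j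
    have p1 : (|u|+|v|)^j ≤ δ*(|u|+|v|)^(2*k+1) + K := by
      rw [hKdef]
      exact young (2*k+1) j hj' (|u|+|v|) δ (by positivity) hδ
    have p2 : δ*(|u|+|v|)^(2*k+1) ≤ δ*(2^(2*k)*(|u|^(2*k+1)+|v|^(2*k+1))) :=
      mul_le_mul_of_nonneg_left addpow hδ.le
    have q1 : δ*2^(2*k)*|v|^(2*k+1) ≤ δ*2^(2*k)*(1+|v|)^(2*k+1) :=
      mul_le_mul_of_nonneg_left ypown (by positivity)
    have q2 : K ≤ K*(1+|v|)^(2*k+1) := le_mul_of_one_le_right hK0 one_le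
    have ypowj : |v|^j ≤ (1+|v|)^(2*k+1) := by
      calc |v|^j ≤ (1+|v|)^j :=
            pow_le_pow_left₀ (abs_nonneg v) (by linarith [abs_nonneg v]) j
        _ ≤ (1+|v|)^(2*k+1) :=
            pow_le_pow_right₀ (by linarith [abs_nonneg v]) hj'.le
    have inner : |u+v|^j + |v|^j
        ≤ δ*2^(2*k)*|u|^(2*k+1) + (δ*2^(2*k)+K+1)*(1+|v|)^(2*k+1) := by
      nlinarith [p0, p1, p2, q1, q2, ypowj]
    calc |aj j * (u+v)^j - aj j * v^j| ≤ |aj j| * (|u+v|^j + |v|^j) := e1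
      _ ≤ C * (δ*2^(2*k)*|u|^(2*k+1) + (δ*2^(2*k)+K+1)*(1+|v|)^(2*k+1)) := by
          apply mul_le_mul hajj inner (by positivity) hC.le
  have hsgn1 : |Real.sign u| ≤ 1 := by
    rcases lt_trichotomy u 0 with h|h|h
    · rw [Real.sign_of_neg h]; norm_num
    · rw [h, Real.sign_zero]; norm_num
    · rw [Real.sign_of_pos h]; norm_num
  have hT : Real.sign u * ((∑ j ∈ Finset.range (2*k+1), aj j * (u+v)^j)
        - ∑ j ∈ Finset.range (2*k+1), aj j * v^j)
      ≤ Nr * (C * (δ*2^(2*k)*|u|^(2*k+1) + (δ*2^(2*k)+K+1)*(1+|v|)^(2*k+1))) := by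
    have e : (∑ j ∈ Finset.range (2*k+1), aj j * (u+v)^j)
        - ∑ j ∈ Finset.range (2*k+1), aj j * v^j
        = ∑ j ∈ Finset.range (2*k+1), (aj j * (u+v)^j - aj j * v^j) :=
      (Finset.sum_sub_distrib _ _).symm
    rw [e]
    calc Real.sign u * ∑ j ∈ Finset.range (2*k+1), (aj j * (u+v)^j - aj j * v^j)
        ≤ |Real.sign u * ∑ j ∈ Finset.range (2*k+1), (aj j * (u+v)^j - aj j * v^j)| :=
          le_abs_self _
      _ = |Real.sign u| * |∑ j ∈ Finset.range (2*k+1), (aj j * (u+v)^j - aj j * v^j)| :=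
          abs_mul _ _
      _ ≤ 1 * |∑ j ∈ Finset.range (2*k+1), (aj j * (u+v)^j - aj j * v^j)| :=
          mul_le_mul_of_nonneg_right hsgn1 (abs_nonneg _)
      _ = |∑ j ∈ Finset.range (2*k+1), (aj j * (u+v)^j - aj j * v^j)| := one_mul _
      _ ≤ ∑ j ∈ Finset.range (2*k+1), |aj j * (u+v)^j - aj j * v^j| :=
          Finset.abs_sum_le_sum_abs _ _
      _ ≤ ∑ j ∈ Finset.range (2*k+1),
            C * (δ*2^(2*k)*|u|^(2*k+1) + (δ*2^(2*k)+K+1)*(1+|v|)^(2*k+1)) :=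
          Finset.sum_le_sum habs
      _ = Nr * (C * (δ*2^(2*k)*|u|^(2*k+1) + (δ*2^(2*k)+K+1)*(1+|v|)^(2*k+1))) := by
          rw [Finset.sum_const, Finset.card_range, nsmul_eq_mul, hNrdef]
  have hT2 : Real.sign u * ((∑ j ∈ Finset.range (2*k+1), aj j * (u+v)^j)
        - ∑ j ∈ Finset.range (2*k+1), aj j * v^j)
      ≤ c/(2*2^(2*k)) * |u|^(2*k+1)
        + C*Nr*(δ*2^(2*k)+K+1)*(1+|v|)^(2*k+1) := by
    refine hT.trans ?_
    have he : Nr * (C * (δ*2^(2*k)*|u|^(2*k+1) + (δ*2^(2*k)+K+1)*(1+|v|)^(2*k+1)))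
        = c/(2*2^(2*k)) * |u|^(2*k+1)
          + C*Nr*(δ*2^(2*k)+K+1)*(1+|v|)^(2*k+1) := by
      linear_combination (|u|^(2*k+1)) * hδid
    linarith [he.le]
  have f1' : c/(2*2^(2*k)) * |u|^(2*k+1) + c/(2*2^(2*k)) * |u|^(2*k+1)
      ≤ c * (Real.sign u * ((u+v)^(2*k+1) - v^(2*k+1))) := by
    have e : c/(2*2^(2*k)) * |u|^(2*k+1) + c/(2*2^(2*k)) * |u|^(2*k+1)
        = c/2^(2*k) * |u|^(2*k+1) := by
      rw [div_mul_eq_mul_div, div_mul_eq_mul_div]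
      rw [← add_div, div_eq_div_iff (by positivity) (by positivity)]
      ring
    rw [e]; exact f1
  have eq0 : Real.sign u *
      ((-a * (u + v) ^ (2 * k + 1)
          + ∑ j ∈ Finset.range (2 * k + 1), aj j * (u + v) ^ j)
        - (-a * v ^ (2 * k + 1)
          + ∑ j ∈ Finset.range (2 * k + 1), aj j * v ^ j))
      = -(a * (Real.sign u * ((u+v)^(2*k+1) - v^(2*k+1))))
        + Real.sign u * ((∑ j ∈ Finset.range (2*k+1), aj j * (u+v)^j)
            - ∑ j ∈ Finset.range (2*k+1), aj j * v^j) := by ring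
  rw [eq0]
  linarith [hT2, f1', f2]
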